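/- For every Q-matrix q ∈ ℝ^{d×d} and every t ≥ 0, the matrix exponential e^{tq} is a stochastic matrix: all entries of e^{tq} are nonnegative and each row of e^{tq} sums to 1. -/

import Mathlib

open NormedSpace Matrix

def IsQMatrix {d : ℕ} (q : Matrix (Fin d) (Fin d) ℝ) : Prop :=
  (∀ i, q i i ≤ 0) ∧ (∀ i j, i ≠ j → 0 ≤ q i j) ∧ (∀ i, ∑ j, q i j = 0)

lemma matexp_summable {d : ℕ} (B : Matrix (Fin d) (Fin d) ℝ) :
    Summable fun n : ℕ => ((n.factorial : ℝ)⁻¹) • B ^ n := by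
  letI : SeminormedRing (Matrix (Fin d) (Fin d) ℝ) := Matrix.linftyOpSemiNormedRing
  letI : NormedRing (Matrix (Fin d) (Fin d) ℝ) := Matrix.linftyOpNormedRing
  letI : NormedAlgebra ℝ (Matrix (Fin d) (Fin d) ℝ) := Matrix.linftyOpNormedAlgebra
  exact NormedSpace.expSeries_summable' B

lemma matexp_apply {d : ℕ} (B : Matrix (Fin d) (Fin d) ℝ) (i j : Fin d) :
    NormedSpace.exp B i j = ∑' n : ℕ, (((n.factorial : ℝ)⁻¹) • B ^ n) i j := by
  have hs := matexp_summable B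
  have hs1 : ∀ i : Fin d, Summable fun n : ℕ => (((n.factorial : ℝ)⁻¹) • B ^ n) i :=
    fun i => Pi.summable.mp hs i
  simp only [NormedSpace.exp_eq_tsum ℝ]
  erw [tsum_apply hs, tsum_apply (hs1 i)]

lemma matexp_entry_summable {d : ℕ} (B : Matrix (Fin d) (Fin d) ℝ) (i j : Fin d) :
    Summable fun n : ℕ => (((n.factorial : ℝ)⁻¹) • B ^ n) i j :=
  Pi.summable.mp (Pi.summable.mp (matexp_summable B) i) j

lemma pow_nonneg_entries {d : ℕ} (B : Matrix (Fin d) (Fin d) ℝ)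
    (hB : ∀ i j, 0 ≤ B i j) (n : ℕ) : ∀ i j, 0 ≤ (B ^ n) i j := by
  induction n with
  | zero => intro i j; simp [Matrix.one_apply]; positivity
  | succ n ih =>
    intro i j
    rw [pow_succ, Matrix.mul_apply]
    exact Finset.sum_nonneg fun k _ => mul_nonneg (ih i k) (hB k j)

lemma exp_nonneg_of_nonneg {d : ℕ} (B : Matrix (Fin d) (Fin d) ℝ)
    (hB : ∀ i j, 0 ≤ B i j) (i j : Fin d) : 0 ≤ NormedSpace.exp B i j := by
  rw [matexp_apply]
  refine tsum_nonneg fun n => ?_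
  simp only [Matrix.smul_apply, smul_eq_mul]
  exact mul_nonneg (by positivity) (pow_nonneg_entries B hB n i j)

/-- For a `Q`-matrix `q` and `t ≥ 0`, the matrix exponential `e^{tq}` is a
stochastic matrix. -/
theorem exp_qMatrix_stochastic {d : ℕ} (hd : 0 < d)
    (q : Matrix (Fin d) (Fin d) ℝ) (hq : IsQMatrix q) (t : ℝ) (ht : 0 ≤ t) :
    (∀ i j, 0 ≤ NormedSpace.exp (t • q) i j) ∧
    (∀ i, ∑ j, NormedSpace.exp (t • q) i j = 1) := by
  obtain ⟨hdiag, hoff, hrow⟩ := hq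
  set B := t • q with hBdef
  constructor
  · -- nonnegativity
    set c : ℝ := ∑ i, -(t * q i i) with hc
    have hcterm : ∀ i : Fin d, 0 ≤ -(t * q i i) := fun i => by
      have := mul_nonpos_of_nonneg_of_nonpos ht (hdiag i); linarith
    have hcge : ∀ i : Fin d, -(t * q i i) ≤ c := fun i =>
      Finset.single_le_sum (fun k _ => hcterm k) (Finset.mem_univ i)
    have hA : ∀ i j, 0 ≤ (B + c • (1 : Matrix (Fin d) (Fin d) ℝ)) i j := by
      intro i j
      simp only [Matrix.add_apply, Matrix.smul_apply, hBdef, Matrix.one_apply, smul_eq_mul]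
      rcases eq_or_ne i j with rfl | hij
      · simp only [if_pos rfl, if_true, eq_self_iff_true, mul_one]
        have := hcge i; linarith
      · simp only [if_neg hij, mul_zero, add_zero]
        exact mul_nonneg ht (hoff i j hij)
    have hcomm : Commute (B + c • (1 : Matrix (Fin d) (Fin d) ℝ))
        ((-c) • (1 : Matrix (Fin d) (Fin d) ℝ)) := by
      apply Commute.smul_right
      exact Commute.one_right _
    have hsplit : B = (B + c • (1 : Matrix (Fin d) (Fin d) ℝ)) +
        (-c) • (1 : Matrix (Fin d) (Fin d) ℝ) := by
      rw [add_assoc, ← add_smul]; simp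
    intro i j
    rw [hsplit, Matrix.exp_add_of_commute _ _ hcomm]
    have h1 : ((-c) • (1 : Matrix (Fin d) (Fin d) ℝ)) =
        Matrix.diagonal (fun _ => -c) := by
      ext a b; simp [Matrix.one_apply, Matrix.diagonal_apply]
    rw [h1, Matrix.exp_diagonal, Matrix.mul_apply]
    refine Finset.sum_nonneg fun k _ => ?_
    rcases eq_or_ne k j with rfl | hkj
    · simp only [Matrix.diagonal_apply_eq, Pi.coe_exp]
      refine mul_nonneg (exp_nonneg_of_nonneg _ hA i k) ?_
      rw [← Real.exp_eq_exp_ℝ]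
      exact (Real.exp_pos _).le
    · simp [Matrix.diagonal_apply_ne _ hkj]
  · -- row sums
    intro i
    have hrowB : ∀ i : Fin d, ∑ j, B i j = 0 := fun i => by
      simp only [hBdef, Matrix.smul_apply, smul_eq_mul, ← Finset.mul_sum, hrow i, mul_zero]
    have hrowpow : ∀ n : ℕ, ∀ i : Fin d,
        ∑ j, (B ^ n) i j = if n = 0 then 1 else 0 := by
      intro n
      induction n with
      | zero => intro i; simp [Matrix.one_apply]
      | succ n ih =>
        intro i
        rw [pow_succ', if_neg (Nat.succ_ne_zero n)]
        simp only [Matrix.mul_apply]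
        rw [Finset.sum_comm]
        calc ∑ k, ∑ j, B i k * (B ^ n) k j
            = ∑ k, B i k * (∑ j, (B ^ n) k j) := by
              simp [Finset.mul_sum]
          _ = 0 := by
              rcases eq_or_ne n 0 with rfl | hn
              · simp only [ih, if_pos rfl, if_true, mul_one]; exact hrowB i
              · simp [ih, hn]
    have := matexp_entry_summable B i
    calc ∑ j, NormedSpace.exp B i j
        = ∑ j, ∑' n : ℕ, (((n.factorial : ℝ)⁻¹) • B ^ n) i j := by
          refine Finset.sum_congr rfl fun j _ => matexp_apply B i j
      _ = ∑' n : ℕ, ∑ j, (((n.factorial : ℝ)⁻¹) • B ^ n) i j := by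
          rw [Summable.tsum_finsetSum]
          exact fun j _ => matexp_entry_summable B i j
      _ = ∑' n : ℕ, ((n.factorial : ℝ)⁻¹) * (if n = 0 then 1 else 0) := by
          refine tsum_congr fun n => ?_
          simp only [Matrix.smul_apply, smul_eq_mul, ← Finset.mul_sum, hrowpow n i]
      _ = 1 := by
          rw [tsum_eq_single 0 (fun n hn => by simp [hn])]
          simp
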